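/- arXiv:1806.06797 — 2 statements merged into one kernel-verified Lean document; each statement's English description precedes it below -/
import Mathlib

section
/- Under the identification ℍ = ℂ², the monogenic hull of ℍ \ {0}, defined as {(x,y) ∈ M₂(ℂ) : x + yq ≠ 0 for all unit imaginary quaternions q}, equals GL(2,ℂ), i.e. the set of 2×2 complex matrices with nonzero determinant. -/
open Quaternion Matrix

/-- The standard embedding `ℍ → M₂(ℂ)`, `q = α + kβ ↦ [[α, -conj β], [β, conj α]]`. -/
noncomputable def quatToMatrix (q : Quaternion ℝ) : Matrix (Fin 2) (Fin 2) ℂ :=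
  !![Complex.mk q.re q.imI, -(starRingEnd ℂ) (Complex.mk q.imK q.imJ);
     Complex.mk q.imK q.imJ, (starRingEnd ℂ) (Complex.mk q.re q.imI)]

/-- The monogenic hull of `ℍ \ {0}` is `GL(2, ℂ)`: a pair `(x, y) ∈ ℍ × ℍ = M₂(ℂ)`
satisfies `x + yq ≠ 0` for all purely imaginary unit quaternions `q` if and only if
the matrix `M(x) + i·M(y)` has nonzero determinant. -/
theorem monogenicHull_of_punctured_quaternions_eq_GL :
    {p : Quaternion ℝ × Quaternion ℝ |
        ∀ q : Quaternion ℝ, q.re = 0 → ‖q‖ = 1 → p.1 + p.2 * q ≠ 0} =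
      {p : Quaternion ℝ × Quaternion ℝ |
        (quatToMatrix p.1 + Complex.I • quatToMatrix p.2).det ≠ 0} := by
  ext ⟨x, y⟩
  simp only [Set.mem_setOf_eq]
  have hdet : (quatToMatrix x + Complex.I • quatToMatrix y).det =
      Complex.mk (normSq x - normSq y) (2 * (star y * x).re) := by
    simp [quatToMatrix, Matrix.det_fin_two, Complex.ext_iff, Quaternion.normSq_def',
      Quaternion.re_mul, Complex.mul_re, Complex.mul_im]
    constructor <;> ring
  rw [hdet, ← not_iff_not]
  push_neg
  rw [show (Complex.mk (normSq x - normSq y) (2 * (star y * x).re) = 0) ↔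
      (normSq x = normSq y ∧ (star y * x).re = 0) by
    rw [Complex.ext_iff]; simp; intro _; constructor <;> intro h <;> linarith]
  constructor
  · rintro ⟨q, hre, hnorm, heq⟩
    have hx : x = -(y * q) := eq_neg_of_add_eq_zero_left heq
    have hq1 : normSq q = 1 := by
      rw [normSq_eq_norm_mul_self, hnorm]; norm_num
    constructor
    · rw [hx, Quaternion.normSq_neg, show normSq (y * q) = normSq y * normSq q from
        _root_.map_mul normSq y q, hq1, mul_one]
    · rw [hx]
      simp only [mul_neg, Quaternion.re_neg]
      have : (star y * (y * q)).re = normSq y * q.re := by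
        simp [Quaternion.re_mul, Quaternion.imI_mul, Quaternion.imJ_mul, Quaternion.imK_mul,
          Quaternion.normSq_def', Quaternion.re_star, Quaternion.imI_star, Quaternion.imJ_star,
          Quaternion.imK_star]
        ring
      rw [this, hre, mul_zero, neg_zero]
  · rintro ⟨hn, hs⟩
    by_cases hy : y = 0
    · have hx : x = 0 := by
        rw [← Quaternion.normSq_eq_zero, hn, hy, map_zero]
      set q0 : Quaternion ℝ := ⟨0, 1, 0, 0⟩ with hq0
      refine ⟨q0, rfl, ?_, by simp [hx, hy]⟩
      have h1 : normSq q0 = 1 := by rw [Quaternion.normSq_def']; simp [q0]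
      rw [normSq_eq_norm_mul_self] at h1
      nlinarith [norm_nonneg q0]
    · refine ⟨-(y⁻¹ * x), ?_, ?_, ?_⟩
      · rw [Quaternion.inv_def]
        simp only [Quaternion.re_neg, smul_mul_assoc, Quaternion.re_smul, smul_eq_mul, hs,
          mul_zero, neg_zero]
      · have hxy : ‖x‖ = ‖y‖ := by
          have := hn
          rw [normSq_eq_norm_mul_self, normSq_eq_norm_mul_self] at this
          nlinarith [norm_nonneg x, norm_nonneg y]
        rw [norm_neg, norm_mul, norm_inv, hxy, inv_mul_cancel₀ (norm_ne_zero_iff.2 hy)]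
      · rw [mul_neg, ← mul_assoc, mul_inv_cancel₀ hy, one_mul, add_neg_cancel]
end

section
/- Let h: ℂ → ℂ be continuous and suppose there exists a continuous function h₁: ℂ → ℂ and an integer k ≤ -2 such that h₁(1/z) = -z^{-k}·conj(z)²·h(z) for all z ≠ 0. Then for every integer ℓ with 0 ≤ ℓ ≤ -k-2, the function z ↦ z^ℓ h(z) is integrable on ℂ with respect to Lebesgue measure. -/
open MeasureTheory

/-- If `h` is the chart representative of a global continuous `(0,1)`-form with
values in `O(k)` on `ℂP¹`, i.e. `h₁(1/z) = -z^{-k} conj(z)² h(z)` with `h₁`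
continuous, and `k ≤ -2`, then `z ↦ zˡ h(z)` is Lebesgue-integrable on `ℂ`
for each `0 ≤ ℓ ≤ -k - 2`. -/
theorem integrable_of_global_form (k : ℤ) (hk : k ≤ -2) (h h₁ : ℂ → ℂ)
    (hcont : Continuous h) (hcont₁ : Continuous h₁)
    (hcompat : ∀ z : ℂ, z ≠ 0 → h₁ z⁻¹ = -(z ^ (-k) * (starRingEnd ℂ) z ^ 2 * h z))
    (ℓ : ℤ) (hℓ0 : 0 ≤ ℓ) (hℓ : ℓ ≤ -k - 2) :
    Integrable (fun z : ℂ => z ^ ℓ * h z) := by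
  set f : ℂ → ℂ := fun z : ℂ => z ^ ℓ * h z with hf
  have hfc : Continuous f := by
    have : f = fun z : ℂ => z ^ ℓ.toNat * h z := by
      funext z
      simp [f, ← zpow_natCast, Int.toNat_of_nonneg hℓ0]
    rw [this]
    exact (continuous_pow _).mul hcont
  obtain ⟨M, hM⟩ := (isCompact_closedBall (0:ℂ) 1).exists_bound_of_continuousOn
    hfc.continuousOn
  obtain ⟨C, hC⟩ := (isCompact_closedBall (0:ℂ) 1).exists_bound_of_continuousOn
    hcont₁.continuousOn
  have hM0 : 0 ≤ M := le_trans (norm_nonneg _) (hM 0 (by simp))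
  have hC0 : 0 ≤ C := le_trans (norm_nonneg _) (hC 0 (by simp))
  set C0 : ℝ := max M C with hC0def
  have hC0nn : 0 ≤ C0 := le_trans hM0 (le_max_left _ _)
  have hint : Integrable (fun z : ℂ => 8 * C0 * (1 + ‖z‖) ^ (-(3:ℝ))) :=
    (integrable_one_add_norm (by simp [Complex.finrank_real_complex]; norm_num)).const_mul _
  refine hint.mono' hfc.aestronglyMeasurable (Filter.Eventually.of_forall fun z => ?_)
  rcases le_or_gt ‖z‖ 1 with hz | hz
  · -- small z
    have h1 : ‖f z‖ ≤ C0 := le_trans (hM z (by simpa using hz)) (le_max_left _ _)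
    have h2 : (8:ℝ)⁻¹ ≤ (1 + ‖z‖) ^ (-(3:ℝ)) := by
      rw [Real.rpow_neg (by positivity)]
      have hle : (1 + ‖z‖) ^ (3:ℝ) ≤ 8 := by
        calc (1 + ‖z‖) ^ (3:ℝ) ≤ 2 ^ (3:ℝ) :=
              Real.rpow_le_rpow (by positivity) (by linarith) (by norm_num)
          _ = 8 := by norm_num
      have := inv_anti₀ (show (0:ℝ) < (1 + ‖z‖) ^ (3:ℝ) by positivity) hle
      linarith
    nlinarith [Real.rpow_nonneg (show (0:ℝ) ≤ 1 + ‖z‖ by positivity) (-(3:ℝ))]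
  · -- large z
    have hz0 : z ≠ 0 := by intro hzz; simp [hzz] at hz; linarith
    have hzn : (0:ℝ) < ‖z‖ := by positivity
    have key : ‖f z‖ = ‖h₁ z⁻¹‖ * ‖z‖ ^ (ℓ + k - 2) := by
      have hn := congrArg norm (hcompat z hz0)
      simp only [norm_neg, norm_mul, norm_zpow, norm_pow, RingHomIsometric.norm_map] at hn
      rw [hf]
      simp only [norm_mul, norm_zpow]
      have hpow : ‖z‖ ^ (-k) * ‖z‖ ^ (2:ℤ) * ‖z‖ ^ (ℓ + k - 2) = ‖z‖ ^ ℓ := by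
        rw [← zpow_add₀ hzn.ne', ← zpow_add₀ hzn.ne']
        congr 1; ring
      rw [hn, ← zpow_natCast ‖z‖ 2, ← hpow]
      push_cast
      ring
    have hh1 : ‖h₁ z⁻¹‖ ≤ C0 := by
      refine le_trans (hC z⁻¹ ?_) (le_max_right _ _)
      simp only [Metric.mem_closedBall, dist_zero_right, norm_inv]
      rw [inv_le_one_iff₀]; right; linarith
    have hzpow : ‖z‖ ^ (ℓ + k - 2) ≤ ‖z‖ ^ (-3 : ℤ) :=
      zpow_le_zpow_right₀ hz.le (by omega)
    have h3 : ‖z‖ ^ (-3:ℤ) ≤ 8 * (1 + ‖z‖) ^ (-(3:ℝ)) := by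
      rw [Real.rpow_neg (by positivity), zpow_neg,
        show (3:ℤ) = ((3:ℕ):ℤ) from rfl, zpow_natCast]
      have hle : (1 + ‖z‖) ^ (3:ℝ) ≤ 8 * ‖z‖ ^ (3:ℕ) := by
        rw [show ((3:ℝ)) = ((3:ℕ):ℝ) by norm_num, Real.rpow_natCast]
        calc (1 + ‖z‖) ^ 3 ≤ (2 * ‖z‖) ^ 3 :=
              pow_le_pow_left₀ (by positivity) (by linarith) 3
          _ = 8 * ‖z‖ ^ 3 := by ring
      calc (‖z‖ ^ (3:ℕ))⁻¹ = 8 / (8 * ‖z‖ ^ (3:ℕ)) := by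
            rw [inv_eq_one_div, div_eq_div_iff (by positivity) (by positivity)]; ring
        _ ≤ 8 / (1 + ‖z‖) ^ (3:ℝ) :=
            div_le_div_of_nonneg_left (by norm_num) (by positivity) hle
        _ = 8 * ((1 + ‖z‖) ^ (3:ℝ))⁻¹ := by rw [div_eq_mul_inv]
    calc ‖f z‖ = ‖h₁ z⁻¹‖ * ‖z‖ ^ (ℓ + k - 2) := key
      _ ≤ C0 * ‖z‖ ^ (-3:ℤ) :=
          mul_le_mul hh1 hzpow (zpow_nonneg hzn.le _) hC0nn
      _ ≤ C0 * (8 * (1 + ‖z‖) ^ (-(3:ℝ))) :=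
          mul_le_mul_of_nonneg_left h3 hC0nn
      _ = 8 * C0 * (1 + ‖z‖) ^ (-(3:ℝ)) := by ring
end
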